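/- Let A be symmetric positive definite and X a matrix with ‖X‖_A := ‖A^{1/2}XA^{-1/2}‖₂ ≤ q < 1 for constants independent of the dimension. For the Gaussian Markov chain θ⁽ᵐ⁺¹⁾ = Xθ⁽ᵐ⁾ + Yf + W⁽ᵐ⁾ as above, started in the stationary distribution N(A⁻¹f, A⁻¹), the integrated autocorrelation time of F·θ⁽ᵐ⁾ for a fixed vector F satisfies τ_int,F = 1 + 2Σ_{s=1}^∞ (FᵀXˢA⁻¹F)/(FᵀA⁻¹F) ≤ (1 + ‖X‖_A)/(1 - ‖X‖_A). -/

import Mathlib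

open Matrix

/-- The spectral (ℓ²-operator) norm of a real square matrix. -/
noncomputable def specNorm {n : ℕ} (M : Matrix (Fin n) (Fin n) ℝ) : ℝ :=
  ‖(Matrix.toEuclideanCLM (𝕜 := ℝ) M : EuclideanSpace ℝ (Fin n) →L[ℝ] EuclideanSpace ℝ (Fin n))‖

/-- The square root of a positive semidefinite matrix, as `Matrix.PosSemidef.sqrt` was defined
in the older Mathlib (that definition has since been removed). -/
noncomputable def posSemidefSqrt {n : Type*} [Fintype n] [DecidableEq n]
    {A : Matrix n n ℝ} (hA : A.PosSemidef) : Matrix n n ℝ :=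
  hA.1.eigenvectorUnitary.1 * diagonal ((↑) ∘ (√·) ∘ hA.1.eigenvalues) *
    (star hA.1.eigenvectorUnitary : Matrix n n ℝ)

lemma posSemidefSqrt_mul_self {n : Type*} [Fintype n] [DecidableEq n]
    {A : Matrix n n ℝ} (hA : A.PosSemidef) : posSemidefSqrt hA * posSemidefSqrt hA = A := by
  have hs := hA.1.spectral_theorem
  rw [Unitary.conjStarAlgAut_apply] at hs
  unfold posSemidefSqrt
  have hU : (star hA.1.eigenvectorUnitary : Matrix n n ℝ) * hA.1.eigenvectorUnitary.1 = 1 :=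
    Unitary.coe_star_mul_self _
  calc _ = hA.1.eigenvectorUnitary.1 * (diagonal ((↑) ∘ (√·) ∘ hA.1.eigenvalues) *
        ((star hA.1.eigenvectorUnitary : Matrix n n ℝ) * hA.1.eigenvectorUnitary.1) *
        diagonal ((↑) ∘ (√·) ∘ hA.1.eigenvalues)) * (star hA.1.eigenvectorUnitary : Matrix n n ℝ) := by
          simp only [Matrix.mul_assoc]
    _ = A := by
      rw [hU, Matrix.mul_one, diagonal_mul_diagonal]
      conv_rhs => rw [hs]
      congr 3
      funext i
      simp [Real.mul_self_sqrt (hA.eigenvalues_nonneg i)]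

lemma posSemidefSqrt_herm {n : Type*} [Fintype n] [DecidableEq n]
    {A : Matrix n n ℝ} (hA : A.PosSemidef) : (posSemidefSqrt hA).IsHermitian := by
  unfold posSemidefSqrt
  simp [Matrix.IsHermitian, Matrix.mul_assoc, Matrix.star_eq_conjTranspose, conjTranspose_eq_transpose_of_trivial]

lemma specNorm_nonneg {n : ℕ} (M : Matrix (Fin n) (Fin n) ℝ) : 0 ≤ specNorm M :=
  norm_nonneg _

lemma specNorm_pow_le {n : ℕ} (M : Matrix (Fin n) (Fin n) ℝ) (s : ℕ) (hs : 0 < s) :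
    specNorm (M ^ s) ≤ specNorm M ^ s := by
  unfold specNorm
  rw [map_pow]
  exact norm_pow_le' _ hs

lemma key_bound {n : ℕ} (M : Matrix (Fin n) (Fin n) ℝ) (g : Fin n → ℝ) :
    |g ⬝ᵥ M.mulVec g| ≤ specNorm M * (g ⬝ᵥ g) := by
  set v : EuclideanSpace ℝ (Fin n) := (WithLp.equiv 2 _).symm g with hv
  have h1 : g ⬝ᵥ M.mulVec g = inner ℝ v ((Matrix.toEuclideanCLM (𝕜 := ℝ) M) v) := by
    simp [PiLp.inner_apply, RCLike.inner_apply, hv, dotProduct, Matrix.mulVec, Matrix.toLin'_apply]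
    exact Finset.sum_congr rfl fun _ _ => mul_comm _ _
  have h2 : g ⬝ᵥ g = ‖v‖ ^ 2 := by
    rw [← real_inner_self_eq_norm_sq]
    simp [PiLp.inner_apply, RCLike.inner_apply, hv, dotProduct]
    rw [EuclideanSpace.norm_eq, Real.sq_sqrt (Finset.sum_nonneg fun _ _ => by positivity)]
    simp [sq]
  rw [h1, h2]
  calc |inner ℝ v ((Matrix.toEuclideanCLM (𝕜 := ℝ) M) v)|
      ≤ ‖v‖ * ‖(Matrix.toEuclideanCLM (𝕜 := ℝ) M) v‖ := abs_real_inner_le_norm _ _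
    _ ≤ ‖v‖ * (specNorm M * ‖v‖) := by
        gcongr
        exact ContinuousLinearMap.le_opNorm _ _
    _ = specNorm M * ‖v‖ ^ 2 := by ring

/-- For a stationary Gaussian chain with
`Cov(Fᵀθ⁽ᵐ⁺ˢ⁾, Fᵀθ⁽ᵐ⁾) = Fᵀ Xˢ A⁻¹ F`, the integrated autocorrelation time
`τ_int,F = 1 + 2 ∑_{s≥1} (Fᵀ Xˢ A⁻¹ F)/(Fᵀ A⁻¹ F)` is well defined (the series is summable)
and satisfies `τ_int,F ≤ (1 + ‖X‖_A)/(1 - ‖X‖_A)` where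
`‖X‖_A := ‖A^{1/2} X A^{-1/2}‖₂ < 1`. -/
theorem iact_bound {n : ℕ}
    (A X : Matrix (Fin n) (Fin n) ℝ) (hA : A.PosDef)
    (F : Fin n → ℝ) (hF : F ≠ 0) (nX : ℝ)
    (hnX : nX = specNorm (posSemidefSqrt hA.posSemidef * X * (posSemidefSqrt hA.posSemidef)⁻¹))
    (hnX1 : nX < 1) :
    Summable (fun s : ℕ =>
        (F ⬝ᵥ ((X ^ (s + 1) * A⁻¹).mulVec F)) / (F ⬝ᵥ (A⁻¹.mulVec F))) ∧
      1 + 2 * ∑' s : ℕ,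
          (F ⬝ᵥ ((X ^ (s + 1) * A⁻¹).mulVec F)) / (F ⬝ᵥ (A⁻¹.mulVec F))
        ≤ (1 + nX) / (1 - nX) := by
  set B := posSemidefSqrt hA.posSemidef with hBdef
  have hBB : B * B = A := posSemidefSqrt_mul_self hA.posSemidef
  have hBherm : B.IsHermitian := posSemidefSqrt_herm hA.posSemidef
  have hdetA : IsUnit A.det := (isUnit_iff_isUnit_det A).1 hA.isUnit
  have hBunit : IsUnit B.det := by
    have h : B.det * B.det = A.det := by rw [← det_mul, hBB]
    exact isUnit_of_mul_isUnit_left (h ▸ hdetA)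
  have hBiB : B⁻¹ * B = 1 := nonsing_inv_mul B hBunit
  have hBBi : B * B⁻¹ = 1 := mul_nonsing_inv B hBunit
  have hAinv : A⁻¹ = B⁻¹ * B⁻¹ := by rw [← hBB, Matrix.mul_inv_rev]
  set Y := B * X * B⁻¹ with hYdef
  obtain ⟨u, hu⟩ := (isUnit_iff_isUnit_det B).2 hBunit
  have hXs : ∀ s : ℕ, X ^ (s + 1) * A⁻¹ = B⁻¹ * Y ^ (s + 1) * B⁻¹ := by
    intro s
    have hY : Y ^ (s + 1) = B * X ^ (s + 1) * B⁻¹ := by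
      rw [hYdef, ← hu, ← Matrix.coe_units_inv, Units.conj_pow]
    rw [hY, hAinv]
    simp only [← Matrix.mul_assoc]
    rw [hBiB, Matrix.one_mul]
  set g := B⁻¹ *ᵥ F with hg
  have hBisymm : (B⁻¹)ᵀ = B⁻¹ := by
    have hBt : Bᵀ = B := by
      have h2 := hBherm
      rwa [Matrix.IsHermitian, conjTranspose_eq_transpose_of_trivial] at h2
    rw [transpose_nonsing_inv, hBt]
  have hvm : F ᵥ* B⁻¹ = g := by
    rw [← Matrix.mulVec_transpose, hBisymm]
  have hnum : ∀ s : ℕ, F ⬝ᵥ ((X ^ (s + 1) * A⁻¹).mulVec F) = g ⬝ᵥ ((Y ^ (s+1)).mulVec g) := by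
    intro s
    rw [hXs s, ← Matrix.mulVec_mulVec, ← Matrix.mulVec_mulVec, Matrix.dotProduct_mulVec, hvm]
  have hden : F ⬝ᵥ (A⁻¹.mulVec F) = g ⬝ᵥ g := by
    rw [hAinv, ← Matrix.mulVec_mulVec, Matrix.dotProduct_mulVec, hvm]
  have hg0 : g ≠ 0 := by
    intro h
    apply hF
    have h3 : B *ᵥ (B⁻¹ *ᵥ F) = B *ᵥ 0 := by rw [← hg, h]
    rwa [Matrix.mulVec_mulVec, hBBi, Matrix.one_mulVec, Matrix.mulVec_zero] at h3
  have hgg : 0 < g ⬝ᵥ g := by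
    have := Matrix.dotProduct_self_star_pos_iff (v := g) |>.2 hg0
    simpa using this
  have hnX0 : 0 ≤ nX := hnX ▸ specNorm_nonneg _
  -- term bound
  have hterm : ∀ s : ℕ,
      |(F ⬝ᵥ ((X ^ (s + 1) * A⁻¹).mulVec F)) / (F ⬝ᵥ (A⁻¹.mulVec F))| ≤ nX ^ (s + 1) := by
    intro s
    rw [hnum s, hden, abs_div, abs_of_pos hgg, div_le_iff₀ hgg]
    calc |g ⬝ᵥ (Y ^ (s+1)).mulVec g| ≤ specNorm (Y ^ (s+1)) * (g ⬝ᵥ g) := key_bound _ _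
      _ ≤ specNorm Y ^ (s+1) * (g ⬝ᵥ g) :=
          mul_le_mul_of_nonneg_right (specNorm_pow_le _ _ (Nat.succ_pos s)) hgg.le
      _ = nX ^ (s+1) * (g ⬝ᵥ g) := by rw [hnX]
  have hgeom : Summable (fun s : ℕ => nX ^ (s + 1)) := by
    have : Summable (fun s : ℕ => nX ^ s) := summable_geometric_of_lt_one hnX0 hnX1
    exact (summable_nat_add_iff 1).2 this
  have hsum : Summable (fun s : ℕ =>
      (F ⬝ᵥ ((X ^ (s + 1) * A⁻¹).mulVec F)) / (F ⬝ᵥ (A⁻¹.mulVec F))) := by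
    apply Summable.of_abs
    exact hgeom.of_nonneg_of_le (fun s => abs_nonneg _) hterm
  refine ⟨hsum, ?_⟩
  have htsum : (∑' s : ℕ,
      (F ⬝ᵥ ((X ^ (s + 1) * A⁻¹).mulVec F)) / (F ⬝ᵥ (A⁻¹.mulVec F))) ≤ nX / (1 - nX) := by
    have h1 : (∑' s : ℕ, (F ⬝ᵥ ((X ^ (s + 1) * A⁻¹).mulVec F)) / (F ⬝ᵥ (A⁻¹.mulVec F)))
        ≤ ∑' s : ℕ, nX ^ (s + 1) :=
      Summable.tsum_le_tsum (fun s => (le_abs_self _).trans (hterm s)) hsum hgeom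
    have h2 : (∑' s : ℕ, nX ^ (s + 1)) = nX / (1 - nX) := by
      have : (∑' s : ℕ, nX ^ (s + 1)) = ∑' s : ℕ, nX * nX ^ s := by
        congr 1; funext s; rw [pow_succ, mul_comm]
      rw [this, tsum_mul_left, tsum_geometric_of_lt_one hnX0 hnX1, div_eq_mul_inv]
    linarith [h1, h2.symm.le, h2.le]
  have h1mn : 0 < 1 - nX := by linarith
  calc 1 + 2 * ∑' s : ℕ,
        (F ⬝ᵥ ((X ^ (s + 1) * A⁻¹).mulVec F)) / (F ⬝ᵥ (A⁻¹.mulVec F))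
      ≤ 1 + 2 * (nX / (1 - nX)) := by linarith
    _ = (1 + nX) / (1 - nX) := by field_simp; ring
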